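/- Let U ⊆ ℂ be a connected open set and let f₁,…,f_n and g₁,…,g_n be holomorphic functions on U, each family linearly independent over ℂ, such that Σ_{i=1}^n |f_i(z)|² = Σ_{j=1}^n |g_j(z)|² for all z ∈ U. Then there exists a unitary n×n matrix A such that (g₁,…,g_n)ᵗ = A·(f₁,…,f_n)ᵗ as functions on U. -/

import Mathlib

open Complex Metric Matrix

local notation "conj'" => starRingEnd ℂ

/-- Antiholomorphic composition: derivative of `z ↦ conj (q (conj z))`. -/
lemma hasDerivAt_conj_conj {q : ℂ → ℂ} {d w : ℂ} (h : HasDerivAt q d ((starRingEnd ℂ) w)) :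
    HasDerivAt (fun z => (starRingEnd ℂ) (q ((starRingEnd ℂ) z))) ((starRingEnd ℂ) d) w := by
  rw [hasDerivAt_iff_isLittleO_nhds_zero] at h ⊢
  have hconj : Filter.Tendsto (fun h' : ℂ => (starRingEnd ℂ) h') (nhds 0) (nhds 0) := by
    simpa using (Complex.continuous_conj.tendsto 0)
  have h2 := h.comp_tendsto hconj
  have key : ∀ h' : ℂ,
      ‖(starRingEnd ℂ) (q ((starRingEnd ℂ) (w + h'))) - (starRingEnd ℂ) (q ((starRingEnd ℂ) w))
        - h' • (starRingEnd ℂ) d‖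
      = ‖q ((starRingEnd ℂ) w + (starRingEnd ℂ) h') - q ((starRingEnd ℂ) w)
        - (starRingEnd ℂ) h' • d‖ := by
    intro h'
    rw [show (starRingEnd ℂ) (q ((starRingEnd ℂ) (w + h'))) - (starRingEnd ℂ) (q ((starRingEnd ℂ) w))
        - h' • (starRingEnd ℂ) d
      = (starRingEnd ℂ) (q ((starRingEnd ℂ) w + (starRingEnd ℂ) h') - q ((starRingEnd ℂ) w)
        - (starRingEnd ℂ) h' • d) by simp [map_add, smul_eq_mul, mul_comm]]
    exact (RCLike.norm_conj _)
  rw [← Asymptotics.isLittleO_norm_norm]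
  rw [← Asymptotics.isLittleO_norm_norm] at h2
  simp only [Function.comp] at h2
  refine h2.congr (fun h' => (key h').symm) (fun h' => ?_)
  exact RCLike.norm_conj _

/-- Frequently-real helper. -/
lemma freq_real {P : ℂ → Prop} {s : ℝ} (hs : 0 < s)
    (h : ∀ x : ℝ, 0 < x → x < s → P (x : ℂ)) : ∃ᶠ z in nhdsWithin (0:ℂ) {0}ᶜ, P z := by
  rw [Filter.frequently_iff]
  intro V hV
  rw [Metric.mem_nhdsWithin_iff] at hV
  obtain ⟨ε, hε, hsub⟩ := hV
  set x : ℝ := min ε s / 2 with hx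
  have hx0 : 0 < x := by positivity
  have hxε : x < ε := lt_of_lt_of_le (by linarith [min_le_left ε s]) le_rfl
  have hxs : x < s := by have := min_le_right ε s; linarith
  refine ⟨(x : ℂ), hsub ⟨?_, ?_⟩, h x hx0 hxs⟩
  · simp only [Metric.mem_ball, Complex.dist_eq, sub_zero, Complex.norm_real, Real.norm_eq_abs]
    rwa [abs_of_pos hx0]
  · simp only [Set.mem_compl_iff, Set.mem_singleton_iff]
    exact_mod_cast ne_of_gt hx0

/-- Identity theorem on a disc from vanishing on a real segment. -/
lemma zero_on_ball {φ : ℂ → ℂ} {s : ℝ} (hs : 0 < s)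
    (hφ : DifferentiableOn ℂ φ (ball (0:ℂ) s))
    (hreal : ∀ x : ℝ, 0 < x → x < s → φ x = 0) :
    ∀ u ∈ ball (0:ℂ) s, φ u = 0 := by
  have han : AnalyticOnNhd ℂ φ (ball (0:ℂ) s) := hφ.analyticOnNhd isOpen_ball
  have h0 : (0:ℂ) ∈ ball (0:ℂ) s := by simpa using hs
  have hfreq : ∃ᶠ z in nhdsWithin (0:ℂ) {0}ᶜ, φ z = 0 := by
    apply freq_real hs
    intro x hx1 hx2; exact hreal x hx1 hx2
  exact fun u hu =>
    han.eqOn_zero_of_preconnected_of_frequently_eq_zero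
      (convex_ball (0:ℂ) s).isPreconnected h0 hfreq hu

/-- Identity theorem: vanishing on a subdisc extends to U. -/
lemma ext_zero {U : Set ℂ} (hU : IsOpen U) (hUc : IsPreconnected U) {h : ℂ → ℂ}
    (hd : DifferentiableOn ℂ h U) {z₀ : ℂ} {ρ : ℝ} (hρ : 0 < ρ) (hz₀ : z₀ ∈ U)
    (h0 : ∀ z ∈ ball z₀ ρ, h z = 0) : ∀ z ∈ U, h z = 0 := by
  have han : AnalyticOnNhd ℂ h U := hd.analyticOnNhd hU
  have hfreq : ∃ᶠ z in nhdsWithin z₀ {z₀}ᶜ, h z = 0 := by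
    apply Filter.Eventually.frequently
    have : ball z₀ ρ ∈ nhdsWithin z₀ {z₀}ᶜ :=
      mem_nhdsWithin_of_mem_nhds (ball_mem_nhds z₀ hρ)
    filter_upwards [this] with z hz using h0 z hz
  exact fun z hz =>
    han.eqOn_zero_of_preconnected_of_frequently_eq_zero hUc hz₀ hfreq hz

/-- Polarization of the squared-norm identity on a subdisc. -/
lemma polarize {U : Set ℂ} (hU : IsOpen U) {n : ℕ} {f g : Fin n → ℂ → ℂ}
    (hf : ∀ i, DifferentiableOn ℂ (f i) U) (hg : ∀ j, DifferentiableOn ℂ (g j) U)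
    (heqC : ∀ z ∈ U, (∑ i, f i z * (starRingEnd ℂ) (f i z)) =
      ∑ j, g j z * (starRingEnd ℂ) (g j z))
    {z₀ : ℂ} {r : ℝ} (hr : 0 < r) (hball : ball z₀ r ⊆ U) :
    ∀ z ∈ ball z₀ (r/8), ∀ w ∈ ball z₀ (r/8),
      (∑ i, f i z * (starRingEnd ℂ) (f i w)) = ∑ j, g j z * (starRingEnd ℂ) (g j w) := by
  have habs : ∀ u v : ℂ, ‖u‖ < r/4 → ‖v‖ < r/4 →
      z₀ + u + Complex.I * v ∈ U := by
    intro u v hu hv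
    apply hball
    rw [mem_ball, Complex.dist_eq]
    calc ‖z₀ + u + Complex.I * v - z₀‖ = ‖u + Complex.I * v‖ := by
          ring_nf
      _ ≤ ‖u‖ + ‖Complex.I * v‖ := norm_add_le _ _
      _ = ‖u‖ + ‖v‖ := by simp
      _ < r/4 + r/4 := add_lt_add hu hv
      _ < r := by linarith
  have hpt : ∀ u v : ℂ, conj' (conj' z₀ + u - Complex.I * v) = z₀ + conj' u + Complex.I * conj' v := by
    intro u v
    simp only [_root_.map_add, _root_.map_sub, _root_.map_mul, Complex.conj_conj, Complex.conj_I]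
    ring
  have habs2 : ∀ u v : ℂ, ‖u‖ < r/4 → ‖v‖ < r/4 →
      conj' (conj' z₀ + u - Complex.I * v) ∈ U := by
    intro u v hu hv
    rw [hpt]
    exact habs (conj' u) (conj' v) (by rwa [Complex.norm_conj]) (by rwa [Complex.norm_conj])
  set Φ : ℂ → ℂ → ℂ := fun u v =>
    (∑ i, f i (z₀ + u + Complex.I * v) * conj' (f i (conj' (conj' z₀ + u - Complex.I * v)))) -
    ∑ j, g j (z₀ + u + Complex.I * v) * conj' (g j (conj' (conj' z₀ + u - Complex.I * v))) with hΦ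
  have hdiff : ∀ (q : ℂ → ℂ), DifferentiableOn ℂ q U →
      ∀ (a : ℂ) (s : ℂ) (u : ℂ), (a + s * u) ∈ U →
      DifferentiableAt ℂ (fun u => q (a + s * u)) u := by
    intro q hq a s u hmem
    have h1 : DifferentiableAt ℂ q (a + s * u) := hq.differentiableAt (hU.mem_nhds hmem)
    have h2 : DifferentiableAt ℂ (fun u : ℂ => a + s * u) u :=
      (differentiableAt_id.const_mul s).const_add a
    exact h1.comp u h2
  have hdiffconj : ∀ (q : ℂ → ℂ), DifferentiableOn ℂ q U →
      ∀ (a : ℂ) (s : ℂ) (u : ℂ), conj' (a + s * u) ∈ U →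
      DifferentiableAt ℂ (fun u => conj' (q (conj' (a + s * u)))) u := by
    intro q hq a s u hmem
    have hqd : HasDerivAt q (deriv q (conj' (a + s*u))) (conj' (a + s*u)) :=
      (hq.differentiableAt (hU.mem_nhds hmem)).hasDerivAt
    have houter : DifferentiableAt ℂ (fun w => conj' (q (conj' w))) (a + s * u) :=
      (hasDerivAt_conj_conj hqd).differentiableAt
    have h2 : DifferentiableAt ℂ (fun u : ℂ => a + s * u) u :=
      (differentiableAt_id.const_mul s).const_add a
    have := houter.comp u h2; exact this
  have hbase : ∀ u v : ℂ, u.im = 0 → v.im = 0 → ‖u‖ < r/4 → ‖v‖ < r/4 →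
      Φ u v = 0 := by
    intro u v hui hvi hu hv
    have hcu : conj' u = u := Complex.conj_eq_iff_im.mpr hui
    have hcv : conj' v = v := Complex.conj_eq_iff_im.mpr hvi
    have hz : z₀ + u + Complex.I * v ∈ U := habs u v hu hv
    have harg : conj' (conj' z₀ + u - Complex.I * v) = z₀ + u + Complex.I * v := by
      rw [hpt, hcu, hcv]
    rw [hΦ]
    simp only [harg]
    rw [sub_eq_zero]
    exact heqC _ hz
  have hclaim1 : ∀ v : ℂ, v.im = 0 → ‖v‖ < r/4 →
      ∀ u ∈ ball (0:ℂ) (r/4), Φ u v = 0 := by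
    intro v hvi hv
    apply zero_on_ball (by linarith : (0:ℝ) < r/4)
    · intro u hu
      rw [mem_ball, dist_zero_right] at hu
      have hu' : ‖u‖ < r/4 := hu
      apply DifferentiableAt.differentiableWithinAt
      have e1 : ∀ u : ℂ, z₀ + u + Complex.I * v = (z₀ + Complex.I * v) + 1 * u := by
        intro u; ring
      have e2 : ∀ u : ℂ, conj' z₀ + u - Complex.I * v = (conj' z₀ - Complex.I * v) + 1 * u := by
        intro u; ring
      apply DifferentiableAt.sub <;>
      · apply DifferentiableAt.fun_sum
        intro i _
        apply DifferentiableAt.mul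
        · simp only [e1]
          first
          | exact hdiff (f i) (hf i) _ 1 u (by rw [← e1]; exact habs u v hu' hv)
          | exact hdiff (g i) (hg i) _ 1 u (by rw [← e1]; exact habs u v hu' hv)
        · simp only [e2]
          first
          | exact hdiffconj (f i) (hf i) _ 1 u (by rw [← e2]; exact habs2 u v hu' hv)
          | exact hdiffconj (g i) (hg i) _ 1 u (by rw [← e2]; exact habs2 u v hu' hv)
    · intro x hx1 hx2
      apply hbase _ _ (Complex.ofReal_im x) hvi _ hv
      rw [Complex.norm_real, Real.norm_eq_abs, abs_of_pos hx1]; exact hx2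
  have hclaim2 : ∀ u ∈ ball (0:ℂ) (r/4), ∀ v ∈ ball (0:ℂ) (r/4), Φ u v = 0 := by
    intro u hu
    rw [mem_ball, dist_zero_right] at hu
    have hu' : ‖u‖ < r/4 := hu
    apply zero_on_ball (by linarith : (0:ℝ) < r/4)
    · intro v hv
      rw [mem_ball, dist_zero_right] at hv
      have hv' : ‖v‖ < r/4 := hv
      apply DifferentiableAt.differentiableWithinAt
      have e2 : ∀ v : ℂ, conj' z₀ + u - Complex.I * v = (conj' z₀ + u) + (-Complex.I) * v := by
        intro v; ring
      apply DifferentiableAt.sub <;>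
      · apply DifferentiableAt.fun_sum
        intro i _
        apply DifferentiableAt.mul
        · first
          | exact hdiff (f i) (hf i) (z₀ + u) Complex.I v (habs u v hu' hv')
          | exact hdiff (g i) (hg i) (z₀ + u) Complex.I v (habs u v hu' hv')
        · simp only [e2]
          first
          | exact hdiffconj (f i) (hf i) _ (-Complex.I) v (by rw [← e2]; exact habs2 u v hu' hv')
          | exact hdiffconj (g i) (hg i) _ (-Complex.I) v (by rw [← e2]; exact habs2 u v hu' hv')
    · intro x hx1 hx2
      apply hclaim1 _ (Complex.ofReal_im x) _ u (by rwa [mem_ball, dist_zero_right])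
      rw [Complex.norm_real, Real.norm_eq_abs, abs_of_pos hx1]; exact hx2
  intro z hz w hw
  rw [mem_ball, Complex.dist_eq] at hz hw
  set u : ℂ := ((z - z₀) + conj' (w - z₀)) / 2 with hu
  set v : ℂ := ((z - z₀) - conj' (w - z₀)) / (2 * Complex.I) with hv
  have hiv : Complex.I * v = ((z - z₀) - conj' (w - z₀)) / 2 := by
    rw [hv]
    have h2I : (2 : ℂ) * Complex.I ≠ 0 := by simp [Complex.I_ne_zero]
    field_simp
  have e1 : z₀ + u + Complex.I * v = z := by rw [hu, hiv]; ring
  have e2 : conj' (conj' z₀ + u - Complex.I * v) = w := by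
    have e2' : conj' z₀ + u - Complex.I * v = conj' w := by
      rw [hu, hiv, _root_.map_sub]; ring
    rw [e2', Complex.conj_conj]
  have h1 : ‖(z - z₀) + conj' (w - z₀)‖ ≤
      ‖z - z₀‖ + ‖w - z₀‖ := by
    calc ‖(z - z₀) + conj' (w - z₀)‖
        ≤ ‖z - z₀‖ + ‖conj' (w - z₀)‖ := norm_add_le _ _
      _ = ‖z - z₀‖ + ‖w - z₀‖ := by rw [Complex.norm_conj]
  have h1' : ‖(z - z₀) - conj' (w - z₀)‖ ≤
      ‖z - z₀‖ + ‖w - z₀‖ := by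
    calc ‖(z - z₀) - conj' (w - z₀)‖
        ≤ ‖z - z₀‖ + ‖conj' (w - z₀)‖ := by
          rw [sub_eq_add_neg]
          exact (norm_add_le _ _).trans (by rw [norm_neg])
      _ = ‖z - z₀‖ + ‖w - z₀‖ := by rw [Complex.norm_conj]
  have habsu : ‖u‖ < r/4 := by
    have h2 : ‖u‖ = ‖(z - z₀) + conj' (w - z₀)‖ / 2 := by
      rw [hu, norm_div, Complex.norm_two]
    rw [h2]; linarith
  have habsv : ‖v‖ < r/4 := by
    have h3 : ‖(2:ℂ) * Complex.I‖ = 2 := by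
      rw [norm_mul, Complex.norm_two, Complex.norm_I, mul_one]
    have h2 : ‖v‖ = ‖(z - z₀) - conj' (w - z₀)‖ / 2 := by
      rw [hv, norm_div, h3]
    rw [h2]; linarith
  have h0 := hclaim2 u (by rw [mem_ball, dist_zero_right]; exact habsu)
    v (by rw [mem_ball, dist_zero_right]; exact habsv)
  rw [hΦ] at h0
  simp only [e1, e2] at h0
  exact sub_eq_zero.mp h0

/-- Calabi rigidity: two linearly independent holomorphic families with the same
squared norm differ by a constant unitary matrix. -/
theorem stmt_10 (U : Set ℂ) (hU : IsOpen U) (hUconn : IsConnected U)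
    (n : ℕ) (f g : Fin n → ℂ → ℂ)
    (hf : ∀ i, DifferentiableOn ℂ (f i) U) (hg : ∀ j, DifferentiableOn ℂ (g j) U)
    (hfind : ∀ c : Fin n → ℂ, (∀ z ∈ U, ∑ i, c i * f i z = 0) → c = 0)
    (hgind : ∀ c : Fin n → ℂ, (∀ z ∈ U, ∑ j, c j * g j z = 0) → c = 0)
    (heq : ∀ z ∈ U, ∑ i, ‖f i z‖ ^ 2 = ∑ j, ‖g j z‖ ^ 2) :
    ∃ A : Matrix (Fin n) (Fin n) ℂ, A ∈ Matrix.unitaryGroup (Fin n) ℂ ∧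
      ∀ z ∈ U, ∀ i, g i z = ∑ j, A i j * f j z := by
  classical
  obtain ⟨z₀, hz₀⟩ := hUconn.nonempty
  obtain ⟨r, hr, hball⟩ := Metric.isOpen_iff.mp hU z₀ hz₀
  -- complex form of the hypothesis
  have key : ∀ x : ℂ, x * conj' x = ((‖x‖ ^ 2 : ℝ) : ℂ) := fun x => by
    rw [Complex.mul_conj, Complex.sq_norm]
  have heqC : ∀ z ∈ U, (∑ i, f i z * conj' (f i z)) = ∑ j, g j z * conj' (g j z) := by
    intro z hz
    calc (∑ i, f i z * conj' (f i z)) = ∑ i, ((‖f i z‖ ^ 2 : ℝ) : ℂ) :=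
          Finset.sum_congr rfl fun i _ => key _
      _ = ((∑ i, ‖f i z‖ ^ 2 : ℝ) : ℂ) := (Complex.ofReal_sum _ _).symm
      _ = ((∑ j, ‖g j z‖ ^ 2 : ℝ) : ℂ) := by rw [heq z hz]
      _ = ∑ j, ((‖g j z‖ ^ 2 : ℝ) : ℂ) := Complex.ofReal_sum _ _
      _ = ∑ j, g j z * conj' (g j z) := Finset.sum_congr rfl fun j _ => (key _).symm
  have P := polarize hU hf hg heqC hr hball
  set B := ball z₀ (r/8) with hB
  have hρ : (0:ℝ) < r/8 := by linarith
  have hBU : B ⊆ U := le_trans (ball_subset_ball (by linarith)) hball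
  have hz₀B : z₀ ∈ B := mem_ball_self hρ
  -- identity theorem extension
  have hext : ∀ (h : ℂ → ℂ), DifferentiableOn ℂ h U → (∀ z ∈ B, h z = 0) →
      ∀ z ∈ U, h z = 0 := by
    intro h hd h0
    exact ext_zero hU hUconn.isPreconnected hd hρ hz₀ h0
  -- the evaluation vectors of f on B span everything
  set F : ℂ → (Fin n → ℂ) := fun z j => f j z with hF
  have hspan : Submodule.span ℂ (F '' B) = ⊤ := by
    by_contra hne
    obtain ⟨φ, hφne, hφ⟩ := Submodule.exists_dual_map_eq_bot_of_lt_top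
      (lt_top_iff_ne_top.mpr hne) inferInstance
    set cc : Fin n → ℂ := fun j => φ (fun j' => if j = j' then 1 else 0) with hcc
    have hval : ∀ x : Fin n → ℂ, φ x = ∑ j, cc j * x j := by
      intro x
      rw [LinearMap.pi_apply_eq_sum_univ φ x]
      exact Finset.sum_congr rfl fun j _ => by rw [smul_eq_mul, mul_comm]
    have hzero : ∀ z ∈ B, ∑ j, cc j * f j z = 0 := by
      intro z hz
      have hmem : F z ∈ Submodule.span ℂ (F '' B) :=
        Submodule.subset_span ⟨z, hz, rfl⟩
      have : φ (F z) = 0 := by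
        have := hφ ▸ Submodule.mem_map_of_mem (f := φ) hmem
        simpa using this
      rw [hval] at this
      simpa [hF] using this
    have hzU : ∀ z ∈ U, ∑ j, cc j * f j z = 0 := by
      apply hext
      · apply DifferentiableOn.fun_sum
        intro j _
        exact (differentiableOn_const (cc j)).mul (hf j)
      · exact hzero
    have : cc = 0 := hfind cc hzU
    refine hφne (LinearMap.ext fun x => ?_)
    rw [hval x, this]
    simp
  -- extract a basis from the spanning set
  obtain ⟨s, hsS, hs_sp, hs_li⟩ := exists_linearIndependent ℂ (F '' B)
  haveI hsfin : Fintype s := (hs_li.setFinite).fintype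
  let hbs : Module.Basis s ℂ (Fin n → ℂ) := Module.Basis.mk hs_li (by rw [Subtype.range_coe, hs_sp, hspan])
  have hcard : Fintype.card s = n := by
    have h1 := Module.finrank_eq_card_basis hbs
    rw [Module.finrank_fintype_fun_eq_card, Fintype.card_fin] at h1
    exact h1.symm
  let e : Fin n ≃ s := (Fintype.equivFinOfCardEq hcard).symm
  have hpts : ∀ k : Fin n, ∃ wp ∈ B, F wp = (e k : Fin n → ℂ) := by
    intro k
    obtain ⟨wp, hwp, hFw⟩ := hsS (e k).2
    exact ⟨wp, hwp, hFw⟩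
  choose w hwB hwF using hpts
  set M : Matrix (Fin n) (Fin n) ℂ := Matrix.of fun k j => f j (w k) with hM
  set N : Matrix (Fin n) (Fin n) ℂ := Matrix.of fun k i => g i (w k) with hN
  have hMunit : IsUnit M := by
    rw [← Matrix.linearIndependent_rows_iff_isUnit]
    have hrows : (fun k => M k) = fun k => ((e k : Fin n → ℂ)) := by
      funext k
      have := hwF k
      funext j
      have := congrFun (hwF k) j
      simpa [hM, hF] using this
    change LinearIndependent ℂ (fun k => M k)
    rw [hrows]
    exact hs_li.comp e e.injective
  have hdetM : IsUnit M.det := (Matrix.isUnit_iff_isUnit_det M).mp hMunit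
  have hGram : M * Mᴴ = N * Nᴴ := by
    ext k l
    simp only [Matrix.mul_apply, Matrix.conjTranspose_apply, hM, hN, Matrix.of_apply]
    have hP := P (w k) (hwB k) (w l) (hwB l)
    simp only [starRingEnd_apply] at hP
    exact hP
  have hNunit : IsUnit N := by
    rw [Matrix.isUnit_iff_isUnit_det]
    have h2 : IsUnit (N.det * (Nᴴ).det) := by
      rw [← Matrix.det_mul, ← hGram, Matrix.det_mul]
      exact hdetM.mul (by rw [Matrix.det_conjTranspose]; exact hdetM.star)
    exact isUnit_of_mul_isUnit_left h2
  set Q : Matrix (Fin n) (Fin n) ℂ := M⁻¹ * N with hQdef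
  have hMHdet : IsUnit (Mᴴ).det := by rw [Matrix.det_conjTranspose]; exact hdetM.star
  have hQN : Q * Nᴴ = Mᴴ := by
    rw [hQdef, Matrix.mul_assoc, ← hGram, ← Matrix.mul_assoc,
      Matrix.nonsing_inv_mul M hdetM, Matrix.one_mul]
  have hQQ : Q * Qᴴ = 1 := by
    have hQconj : Qᴴ = Nᴴ * (Mᴴ)⁻¹ := by
      rw [hQdef, Matrix.conjTranspose_mul, Matrix.conjTranspose_nonsing_inv]
    rw [hQconj, ← Matrix.mul_assoc, hQN, Matrix.mul_nonsing_inv _ hMHdet]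
  have hQQ' : Qᴴ * Q = 1 := mul_eq_one_comm.mp hQQ
  set A : Matrix (Fin n) (Fin n) ℂ := Qᵀ with hA
  have hAunitary : A ∈ Matrix.unitaryGroup (Fin n) ℂ := by
    rw [Matrix.mem_unitaryGroup_iff]
    have hstar : star A = (Qᴴ)ᵀ := by
      ext i j
      simp [hA, Matrix.star_eq_conjTranspose, Matrix.conjTranspose_apply,
        Matrix.transpose_apply]
    rw [hstar, hA, ← Matrix.transpose_mul, hQQ', Matrix.transpose_one]
  refine ⟨A, hAunitary, ?_⟩
  -- entrywise key identity : ∑ i, star (N l i) * A i j = star (M l j)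
  have hkey : ∀ l j, (∑ i, star (N l i) * A i j) = star (M l j) := by
    intro l j
    have h1 := congrFun (congrFun hQN j) l
    simp only [Matrix.mul_apply, Matrix.conjTranspose_apply] at h1
    calc (∑ i, star (N l i) * A i j) = ∑ i, Q j i * star (N l i) := by
          apply Finset.sum_congr rfl
          intro i _
          rw [hA, Matrix.transpose_apply, mul_comm]
      _ = star (M l j) := h1
  -- the relation on B
  have hrelB : ∀ z ∈ B, ∀ i, g i z = ∑ j, A i j * f j z := by
    intro z hz
    set x : Fin n → ℂ := fun i => g i z - ∑ j, A i j * f j z with hx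
    have hxz : ∀ l, ∑ i, star (N l i) * x i = 0 := by
      intro l
      have hP := P z hz (w l) (hwB l)
      simp only [starRingEnd_apply] at hP
      have hc1 : (∑ i, star (N l i) * g i z) = ∑ j, f j z * star (f j (w l)) := by
        calc (∑ i, star (N l i) * g i z) = ∑ i, g i z * star (g i (w l)) := by
              apply Finset.sum_congr rfl; intro i _; rw [hN]; simp [mul_comm]
          _ = ∑ j, f j z * star (f j (w l)) := hP.symm
      have hc2 : (∑ i, star (N l i) * ∑ j, A i j * f j z) = ∑ j, star (M l j) * f j z := by
        calc (∑ i, star (N l i) * ∑ j, A i j * f j z)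
            = ∑ j, (∑ i, star (N l i) * A i j) * f j z := by
              simp only [Finset.mul_sum, Finset.sum_mul]
              rw [Finset.sum_comm]
              apply Finset.sum_congr rfl; intro j _
              apply Finset.sum_congr rfl; intro i _; ring
          _ = ∑ j, star (M l j) * f j z := by
              apply Finset.sum_congr rfl; intro j _; rw [hkey]
      calc (∑ i, star (N l i) * x i)
          = (∑ i, star (N l i) * g i z) - ∑ i, star (N l i) * ∑ j, A i j * f j z := by
            rw [hx]; simp only [mul_sub]; rw [Finset.sum_sub_distrib]
        _ = (∑ j, f j z * star (f j (w l))) - ∑ j, star (M l j) * f j z := by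
            rw [hc1, hc2]
        _ = 0 := by
            rw [sub_eq_zero]
            apply Finset.sum_congr rfl
            intro j _
            rw [hM]; simp [mul_comm]
    have hNstar : IsUnit (N.map star) := by
      have hEq : N.map star = (Nᴴ)ᵀ := by
        ext i j
        simp [Matrix.conjTranspose_apply, Matrix.transpose_apply, Matrix.map_apply]
      rw [hEq, Matrix.isUnit_iff_isUnit_det, Matrix.det_transpose, Matrix.det_conjTranspose]
      exact ((Matrix.isUnit_iff_isUnit_det N).mp hNunit).star
    have hinj := Matrix.mulVec_injective_iff_isUnit.mpr hNstar
    have hx0 : x = 0 := by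
      apply hinj
      funext l
      show ((N.map star).mulVec x) l = ((N.map star).mulVec 0) l
      rw [Matrix.mulVec_zero]
      simp only [Matrix.mulVec, dotProduct, Matrix.map_apply]
      simpa using hxz l
    intro i
    have := congrFun hx0 i
    simpa [hx, sub_eq_zero] using this
  -- extend from B to U by the identity theorem
  intro z hz i
  have hd : DifferentiableOn ℂ (fun z => g i z - ∑ j, A i j * f j z) U :=
    (hg i).sub (DifferentiableOn.fun_sum fun j _ => (differentiableOn_const _).mul (hf j))
  have h0 : ∀ z ∈ B, g i z - ∑ j, A i j * f j z = 0 := fun z hz => by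
    rw [sub_eq_zero]; exact hrelB z hz i
  have := hext _ hd h0 z hz
  rwa [sub_eq_zero] at this
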